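/- The independence complex of the 1-subdivision graph of the complete bipartite graph K_{n,m} is homotopy equivalent to a sphere of dimension n + m − 2, for all positive integers n, m. -/

import Mathlib

open SimpleGraph CategoryTheory

namespace Paper

variable {V : Type} {W : Type}

/-- The 1-subdivision of a graph `G`: each edge is replaced by a path of
length two, by inserting a new vertex (the edge itself) on every edge. -/
def subdiv (G : SimpleGraph V) : SimpleGraph (V ⊕ G.edgeSet) where
  Adj x y :=
    match x, y with
    | Sum.inl v, Sum.inr e => v ∈ (e : Sym2 V)
    | Sum.inr e, Sum.inl v => v ∈ (e : Sym2 V)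
    | _, _ => False
  symm := ⟨by
    rintro (v | e) (w | f) h
    · exact h.elim
    · exact h
    · exact h
    · exact h.elim⟩
  loopless := ⟨by rintro (v | e) h <;> exact h.elim⟩

/-- The geometric realization of the independence complex of a graph:
convex combinations of vertices whose support is an independent set. -/
def indRealization (G : SimpleGraph V) : Type :=
  {f : V → ℝ // (∀ v, 0 ≤ f v) ∧ (∑ᶠ v, f v) = 1 ∧
     ∀ u v, f u ≠ 0 → f v ≠ 0 → ¬ G.Adj u v}

instance (G : SimpleGraph V) : TopologicalSpace (indRealization G) := by
  delta indRealization; infer_instance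

/-- The singular chain complex of a space, with rational coefficients. -/
noncomputable def singularChains (X : Type) [TopologicalSpace X] :
    ChainComplex (ModuleCat ℚ) ℕ :=
  (AlgebraicTopology.alternatingFaceMapComplex (ModuleCat ℚ)).obj
    (((SimplicialObject.whiskering _ _).obj (ModuleCat.free ℚ)).obj
      (TopCat.toSSet.obj (TopCat.of X)))

/-- Nontriviality of the `n`-th singular homology with rational coefficients. -/
def homologyNontrivial (X : Type) [TopologicalSpace X] (n : ℕ) : Prop :=
  Nontrivial ((singularChains X).homology n)

/-- Nontriviality of the reduced singular homology (rational coefficients)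
in degree `n : ℤ`. -/
def reducedHomologyNontrivial (X : Type) [TopologicalSpace X] : ℤ → Prop
  | Int.negSucc 0 => IsEmpty X
  | Int.negSucc (_ + 1) => False
  | Int.ofNat 0 => ∃ x y : X, ¬ Joined x y
  | Int.ofNat (n + 1) => homologyNontrivial X (n + 1)

/-- The Castelnuovo–Mumford regularity of a graph: the largest `j` such that
some induced subcomplex of the independence complex has nontrivial reduced
homology in dimension `j - 1`. -/
noncomputable def greg {V : Type} (G : SimpleGraph V) : ℕ :=
  sSup { j : ℕ |
    ∃ S : Set V, reducedHomologyNontrivial (indRealization (G.induce S)) ((j : ℤ) - 1) }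

/-- `X, Y : Fin k → Finset V` describe a partition of the vertex set of `G`
into `k` (not necessarily induced) bicliques with sides `X i` and `Y i`. -/
def IsBicliquePartition (G : SimpleGraph V) (k : ℕ) (X Y : Fin k → Finset V) : Prop :=
  (∀ i, (X i).Nonempty) ∧ (∀ i, Disjoint (X i) (Y i)) ∧
  (∀ i, ∀ x ∈ X i, ∀ y ∈ Y i, G.Adj x y) ∧
  (∀ v : V, ∃! i : Fin k, v ∈ X i ∨ v ∈ Y i)

/-- The biclique vertex partition number `bp G`. -/
noncomputable def bp (G : SimpleGraph V) : ℕ :=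
  sInf { k | ∃ X Y : Fin k → Finset V, IsBicliquePartition G k X Y }

/-- `γ(A, G)`: the least size of a vertex set dominating `A`. -/
noncomputable def domNum (G : SimpleGraph V) (A : Set V) : ℕ :=
  sInf { n | ∃ D : Finset V, D.card = n ∧ ∀ a ∈ A, ∃ d ∈ D, d = a ∨ G.Adj d a }

/-- The domination number `γ(G)`. -/
noncomputable def gamma (G : SimpleGraph V) : ℕ := domNum G Set.univ

/-- The independence domination number `γ^i(G)`: the maximum of `γ(I, G)` over
independent sets `I` consisting of non-isolated vertices. -/
noncomputable def iDom (G : SimpleGraph V) : ℕ :=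
  sSup { n | ∃ I : Set V, (∀ v ∈ I, ∃ w, G.Adj v w) ∧
      (∀ u ∈ I, ∀ v ∈ I, ¬ G.Adj u v) ∧ n = domNum G I }

/-- `M` is an induced matching of `G`. -/
def IsInducedMatching (G : SimpleGraph V) (M : Finset (Sym2 V)) : Prop :=
  ((M : Set (Sym2 V)) ⊆ G.edgeSet) ∧
  ∀ e ∈ M, ∀ f ∈ M, e ≠ f → ∀ u ∈ e, ∀ v ∈ f, u ≠ v ∧ ¬ G.Adj u v

/-- The induced matching number of `G`. -/
noncomputable def imNum (G : SimpleGraph V) : ℕ :=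
  sSup { n | ∃ M : Finset (Sym2 V), IsInducedMatching G M ∧ M.card = n }

/-- A simple vertex: the neighborhoods of its neighbors are linearly
ordered by inclusion. -/
def IsSimpleVertex (G : SimpleGraph V) (x : V) : Prop :=
  ∀ u v : V, G.Adj x u → G.Adj x v →
    G.neighborSet u ⊆ G.neighborSet v ∨ G.neighborSet v ⊆ G.neighborSet u

/-- A bisimplicial edge `uv`: every vertex of `N(u) \ {v}` is adjacent to
every vertex of `N(v) \ {u}`, i.e. `N[e]` induces a complete bipartite graph. -/
def IsBisimplicialEdge (G : SimpleGraph V) (u v : V) : Prop :=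
  G.Adj u v ∧ ∀ a b : V, G.Adj u a → a ≠ v → G.Adj v b → b ≠ u → G.Adj a b

/-- A chordal bipartite graph: bipartite with no induced cycle of length
greater than four. -/
def ChordalBipartite (G : SimpleGraph V) : Prop :=
  G.Colorable 2 ∧ ∀ n : ℕ, 4 < n → IsEmpty (cycleGraph n ↪g G)

/-- Attach a pendant vertex (whisker) `w : W` at the vertex `φ w` for each `w`. -/
def addPendants (G : SimpleGraph V) (φ : W → V) : SimpleGraph (V ⊕ W) where
  Adj x y :=
    match x, y with
    | Sum.inl a, Sum.inl b => G.Adj a b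
    | Sum.inl a, Sum.inr w => a = φ w
    | Sum.inr w, Sum.inl a => a = φ w
    | Sum.inr _, Sum.inr _ => False
  symm := ⟨by
    rintro (a | w) (b | x) h
    · exact h.symm
    · exact h
    · exact h
    · exact h.elim⟩
  loopless := ⟨by
    rintro (a | w) h
    · exact G.loopless.irrefl a h
    · exact h.elim⟩

/-- The closed neighborhood, inside the vertex set `Ws`, of the edge `uv`. -/
def closedEdgeNbhdOn (G : SimpleGraph V) (Ws : Set V) (u v : V) : Set V :=
  {w ∈ Ws | w = u ∨ w = v ∨ G.Adj u w ∨ G.Adj v w}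

/-- The vertex sets `B_i` remaining after successively removing the closed
neighborhoods of the edges `e 0, e 1, …`. -/
def remSet (G : SimpleGraph V) (e : ℕ → V × V) : ℕ → Set V
  | 0 => Set.univ
  | i + 1 => remSet G e i \ closedEdgeNbhdOn G (remSet G e i) (e i).1 (e i).2

/-- A simple vertex of the subgraph induced on `Ws`. -/
def SimpleVertexOn (G : SimpleGraph V) (Ws : Set V) (x : V) : Prop :=
  x ∈ Ws ∧ ∀ u ∈ Ws, ∀ v ∈ Ws, G.Adj x u → G.Adj x v →
    ({a ∈ Ws | G.Adj u a} ⊆ {a ∈ Ws | G.Adj v a} ∨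
     {a ∈ Ws | G.Adj v a} ⊆ {a ∈ Ws | G.Adj u a})

/-- A bisimplicial edge of the subgraph induced on `Ws`. -/
def BisimplicialOn (G : SimpleGraph V) (Ws : Set V) (u v : V) : Prop :=
  u ∈ Ws ∧ v ∈ Ws ∧ G.Adj u v ∧
    ∀ a ∈ Ws, ∀ b ∈ Ws, G.Adj u a → a ≠ v → G.Adj v b → b ≠ u → G.Adj a b

/-- `e 0, …, e (k-1)` is a biclique elimination sequence for `G`. -/
def IsBES (G : SimpleGraph V) (k : ℕ) (e : ℕ → V × V) : Prop :=
  (∀ i < k, BisimplicialOn G (remSet G e i) (e i).1 (e i).2) ∧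
  ∀ u ∈ remSet G e k, ∀ v ∈ remSet G e k, ¬ G.Adj u v

/-- A simple biclique elimination sequence. -/
def IsSimpleBES (G : SimpleGraph V) (k : ℕ) (e : ℕ → V × V) : Prop :=
  IsBES G k e ∧
  ∀ i < k, SimpleVertexOn G (remSet G e i) (e i).1 ∨
           SimpleVertexOn G (remSet G e i) (e i).2

/-- A complete simple biclique elimination sequence: no deletion step ever
leaves an isolated vertex behind. -/
def IsCompleteSBES (G : SimpleGraph V) (k : ℕ) (e : ℕ → V × V) : Prop :=
  IsSimpleBES G k e ∧
  ∀ i < k, ∀ w ∈ remSet G e (i + 1), ∃ w' ∈ remSet G e (i + 1), G.Adj w w'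

/-- `v` is covered by (incident to) an edge of `M`. -/
def coveredBy (M : Finset (Sym2 V)) (v : V) : Prop := ∃ e ∈ M, v ∈ e

/-- The class `Γ`: connected bipartite graphs of minimum degree at least two,
with an induced matching `M` with `|M| > |V|/3` such that every uncovered
vertex is adjacent to endpoints of at least two distinct edges of `M`. -/
def InGamma (G : SimpleGraph V) (M : Finset (Sym2 V)) : Prop :=
  G.Colorable 2 ∧ G.Connected ∧
  (∀ v : V, ∃ w w' : V, w ≠ w' ∧ G.Adj v w ∧ G.Adj v w') ∧
  IsInducedMatching G M ∧
  3 * M.card > Nat.card V ∧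
  (∀ v : V, ¬ coveredBy M v →
    ∃ e ∈ M, ∃ f ∈ M, e ≠ f ∧ (∃ x ∈ e, G.Adj v x) ∧ (∃ y ∈ f, G.Adj v y))

namespace SphereAux


/-! ### real posPart/negPart helpers -/

lemma negPart_anti {a b : ℝ} (h : a ≤ b) : b⁻ ≤ a⁻ := by
  simp only [negPart_def]; exact sup_le_sup_right (neg_le_neg h) 0

lemma negPart_smul {t a : ℝ} (ht : 0 ≤ t) : (t*a)⁻ = t * a⁻ := by
  rcases le_or_gt a 0 with h|h
  · rw [negPart_eq_neg.2 h, negPart_eq_neg.2 (by nlinarith), neg_mul_eq_mul_neg]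
  · rw [negPart_eq_zero.2 h.le, negPart_eq_zero.2 (by positivity), mul_zero]

lemma posPart_smul {t a : ℝ} (ht : 0 ≤ t) : (t*a)⁺ = t * a⁺ := by
  rcases le_or_gt a 0 with h|h
  · rw [posPart_eq_zero.2 h, posPart_eq_zero.2 (by nlinarith), mul_zero]
  · rw [posPart_eq_self.2 h.le, posPart_eq_self.2 (by positivity)]

lemma continuous_negPart : Continuous (fun a : ℝ => a⁻) := by
  simp only [negPart_def]; fun_prop

lemma continuous_posPart : Continuous (fun a : ℝ => a⁺) := by
  simp only [posPart_def]; fun_prop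

lemma pn_neg {a r : ℝ} (ha : 0 ≤ a) (hr : 0 ≤ r) (h : r ≠ 0 → a = 0) : (a - r)⁻ = r := by
  rcases eq_or_ne r 0 with h0|h0
  · subst h0; rw [negPart_eq_zero.2 (by linarith)]
  · rw [h h0]; rw [negPart_eq_neg.2 (by linarith)]; ring

lemma pn_pos {a r : ℝ} (ha : 0 ≤ a) (hr : 0 ≤ r) (h : r ≠ 0 → a = 0) : (a - r)⁺ = a := by
  rcases eq_or_ne r 0 with h0|h0
  · subst h0; rw [posPart_eq_self.2 (by linarith)]; ring
  · rw [h h0, posPart_eq_zero.2 (by linarith)]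

lemma negPart_pos_iff {a : ℝ} : a⁻ ≠ 0 ↔ a < 0 := by
  rw [ne_eq, negPart_eq_zero]; push_neg; rfl

/-! ### the ambient space, `e`-vector, and basic functionals -/

variable (n m : ℕ)

abbrev Ed := EuclideanSpace ℝ (Fin n ⊕ Fin m)

noncomputable def ee : Ed n m := WithLp.toLp 2 (fun i => Sum.elim (fun _ => (1:ℝ)) (fun _ => (-1:ℝ)) i)

/-- `h`-functional whose zero set is the cone `C`. -/
noncomputable def hfun (z : Ed n m) : ℝ := ∑ x, (z (Sum.inl x))⁻ - ∑ y, (z (Sum.inr y))⁻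

/-- normalization functional. -/
noncomputable def gfun (z : Ed n m) : ℝ :=
  (∑ x, (z (Sum.inl x))⁺) + (∑ y, (z (Sum.inr y))⁺) + ∑ x, (z (Sum.inl x))⁻

noncomputable def gam (z : Ed n m) : ℝ := ∑ x, (z (Sum.inl x))⁻
noncomputable def gam' (z : Ed n m) : ℝ := ∑ y, (z (Sum.inr y))⁻

lemma continuous_coord (i : Fin n ⊕ Fin m) : Continuous (fun z : Ed n m => z i) :=
  PiLp.continuous_apply 2 _ i

lemma continuous_hfun : Continuous (hfun n m) := by
  unfold hfun
  exact (continuous_finset_sum _ fun x _ =>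
      continuous_negPart.comp (continuous_coord n m _)).sub
    (continuous_finset_sum _ fun y _ => continuous_negPart.comp (continuous_coord n m _))

lemma continuous_gfun : Continuous (gfun n m) := by
  unfold gfun
  exact ((continuous_finset_sum _ fun x _ =>
      continuous_posPart.comp (continuous_coord n m _)).add
    (continuous_finset_sum _ fun y _ =>
      continuous_posPart.comp (continuous_coord n m _))).add
    (continuous_finset_sum _ fun x _ => continuous_negPart.comp (continuous_coord n m _))

lemma continuous_gam : Continuous (gam n m) :=
  continuous_finset_sum _ fun x _ => continuous_negPart.comp (continuous_coord n m _)

lemma gam_nonneg (z : Ed n m) : 0 ≤ gam n m z :=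
  Finset.sum_nonneg fun _ _ => negPart_nonneg _

lemma gam'_nonneg (z : Ed n m) : 0 ≤ gam' n m z :=
  Finset.sum_nonneg fun _ _ => negPart_nonneg _

lemma gam'_eq_gam {z : Ed n m} (hz : hfun n m z = 0) : gam' n m z = gam n m z := by
  have : gam n m z - gam' n m z = 0 := hz
  linarith

lemma coord_neg_le_gam (z : Ed n m) (x : Fin n) : (z (Sum.inl x))⁻ ≤ gam n m z :=
  Finset.single_le_sum (f := fun x => (z (Sum.inl x))⁻) (fun _ _ => negPart_nonneg _)
    (Finset.mem_univ x)

lemma coord_neg_le_gam' (z : Ed n m) (y : Fin m) : (z (Sum.inr y))⁻ ≤ gam' n m z :=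
  Finset.single_le_sum (f := fun y => (z (Sum.inr y))⁻) (fun _ _ => negPart_nonneg _)
    (Finset.mem_univ y)

lemma gfun_nonneg (z : Ed n m) : 0 ≤ gfun n m z := by
  unfold gfun
  have h1 : (0:ℝ) ≤ ∑ x, (z (Sum.inl x))⁺ := Finset.sum_nonneg fun _ _ => posPart_nonneg _
  have h2 : (0:ℝ) ≤ ∑ y, (z (Sum.inr y))⁺ := Finset.sum_nonneg fun _ _ => posPart_nonneg _
  have h3 : (0:ℝ) ≤ ∑ x, (z (Sum.inl x))⁻ := Finset.sum_nonneg fun _ _ => negPart_nonneg _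
  linarith

lemma gfun_pos {z : Ed n m} (hz : hfun n m z = 0) (h0 : z ≠ 0) : 0 < gfun n m z := by
  rcases (gfun_nonneg n m z).lt_or_eq with h|h
  · exact h
  exfalso; apply h0
  have h1 : (0:ℝ) ≤ ∑ x, (z (Sum.inl x))⁺ := Finset.sum_nonneg fun _ _ => posPart_nonneg _
  have h2 : (0:ℝ) ≤ ∑ y, (z (Sum.inr y))⁺ := Finset.sum_nonneg fun _ _ => posPart_nonneg _
  have h3 : (0:ℝ) ≤ ∑ x, (z (Sum.inl x))⁻ := Finset.sum_nonneg fun _ _ => negPart_nonneg _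
  have hg : gfun n m z = _ := rfl
  have e1 : ∑ x, (z (Sum.inl x))⁺ = 0 := by unfold gfun at h; linarith
  have e2 : ∑ y, (z (Sum.inr y))⁺ = 0 := by unfold gfun at h; linarith
  have e3 : ∑ x, (z (Sum.inl x))⁻ = 0 := by unfold gfun at h; linarith
  have e4 : ∑ y, (z (Sum.inr y))⁻ = 0 := by
    have := gam'_eq_gam n m hz; unfold gam gam' at this; linarith
  ext i
  have hp : ∀ (a : ℝ), a⁺ = 0 → a⁻ = 0 → a = 0 := by
    intro a h1 h2
    have := posPart_sub_negPart a; rw [h1, h2] at this; linarith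
  rcases i with x|y
  · have q1 := (Finset.sum_eq_zero_iff_of_nonneg (fun _ _ => posPart_nonneg _)).1 e1 x
      (Finset.mem_univ x)
    have q2 := (Finset.sum_eq_zero_iff_of_nonneg (fun _ _ => negPart_nonneg _)).1 e3 x
      (Finset.mem_univ x)
    exact hp _ q1 q2
  · have q1 := (Finset.sum_eq_zero_iff_of_nonneg (fun _ _ => posPart_nonneg _)).1 e2 y
      (Finset.mem_univ y)
    have q2 := (Finset.sum_eq_zero_iff_of_nonneg (fun _ _ => negPart_nonneg _)).1 e4 y
      (Finset.mem_univ y)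
    exact hp _ q1 q2

lemma hfun_smul {t : ℝ} (ht : 0 ≤ t) (z : Ed n m) : hfun n m (t • z) = t * hfun n m z := by
  unfold hfun
  have : ∀ i, (t • z) i = t * z i := fun i => rfl
  simp only [this, negPart_smul ht, ← Finset.mul_sum]
  ring

lemma gfun_smul {t : ℝ} (ht : 0 ≤ t) (z : Ed n m) : gfun n m (t • z) = t * gfun n m z := by
  unfold gfun
  have : ∀ i, (t • z) i = t * z i := fun i => rfl
  simp only [this, negPart_smul ht, posPart_smul ht, ← Finset.mul_sum]
  ring

/-! ### the section function `splus` -/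

lemma apply_inl (z : Ed n m) (s : ℝ) (x : Fin n) :
    (z + s • ee n m) (Sum.inl x) = z (Sum.inl x) + s := by
  have h1 : (z + s • ee n m) (Sum.inl x) = z (Sum.inl x) + s * ee n m (Sum.inl x) := rfl
  rw [h1]; simp [ee]

lemma apply_inr (z : Ed n m) (s : ℝ) (y : Fin m) :
    (z + s • ee n m) (Sum.inr y) = z (Sum.inr y) - s := by
  have h1 : (z + s • ee n m) (Sum.inr y) = z (Sum.inr y) + s * ee n m (Sum.inr y) := rfl
  rw [h1]; simp [ee]; ring

/-- `hfun` along the line through `z` in direction `ee`. -/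
noncomputable def hs (z : Ed n m) (s : ℝ) : ℝ := hfun n m (z + s • ee n m)

lemma hs_eq (z : Ed n m) (s : ℝ) :
    hs n m z s = ∑ x, (z (Sum.inl x) + s)⁻ - ∑ y, (z (Sum.inr y) - s)⁻ := by
  unfold hs hfun
  simp only [apply_inl, apply_inr]

lemma hs_antitone (z : Ed n m) : Antitone (hs n m z) := by
  intro s s' hss
  rw [hs_eq, hs_eq]
  have h1 : ∑ x, (z (Sum.inl x) + s')⁻ ≤ ∑ x, (z (Sum.inl x) + s)⁻ :=
    Finset.sum_le_sum fun x _ => negPart_anti (by linarith)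
  have h2 : ∑ y, (z (Sum.inr y) - s)⁻ ≤ ∑ y, (z (Sum.inr y) - s')⁻ :=
    Finset.sum_le_sum fun y _ => negPart_anti (by linarith)
  linarith

lemma continuous_hs_s (z : Ed n m) : Continuous (hs n m z) :=
  (continuous_hfun n m).comp (continuous_const.add (continuous_id.smul continuous_const))

lemma continuous_hs_z (s : ℝ) : Continuous (fun z => hs n m z s) :=
  (continuous_hfun n m).comp (continuous_id.add continuous_const)

/-- The sublevel set whose sup is the section. -/
def Sset (z : Ed n m) : Set ℝ := {s | 0 ≤ hs n m z s}

/-- crude bound -/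
noncomputable def bnd (z : Ed n m) : ℝ :=
  (∑ x, |z (Sum.inl x)|) + (∑ y, |z (Sum.inr y)|) + 1

lemma bnd_pos (z : Ed n m) : 0 < bnd n m z := by
  unfold bnd
  have h1 : (0:ℝ) ≤ ∑ x, |z (Sum.inl x)| := Finset.sum_nonneg fun _ _ => abs_nonneg _
  have h2 : (0:ℝ) ≤ ∑ y, |z (Sum.inr y)| := Finset.sum_nonneg fun _ _ => abs_nonneg _
  linarith

lemma abs_coord_le_bnd_inl (z : Ed n m) (x : Fin n) : |z (Sum.inl x)| ≤ bnd n m z := by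
  unfold bnd
  have h1 : |z (Sum.inl x)| ≤ ∑ x, |z (Sum.inl x)| :=
    Finset.single_le_sum (f := fun x => |z (Sum.inl x)|) (fun _ _ => abs_nonneg _)
      (Finset.mem_univ x)
  have h2 : (0:ℝ) ≤ ∑ y, |z (Sum.inr y)| := Finset.sum_nonneg fun _ _ => abs_nonneg _
  linarith

lemma abs_coord_le_bnd_inr (z : Ed n m) (y : Fin m) : |z (Sum.inr y)| ≤ bnd n m z := by
  unfold bnd
  have h1 : |z (Sum.inr y)| ≤ ∑ y, |z (Sum.inr y)| :=
    Finset.single_le_sum (f := fun y => |z (Sum.inr y)|) (fun _ _ => abs_nonneg _)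
      (Finset.mem_univ y)
  have h2 : (0:ℝ) ≤ ∑ x, |z (Sum.inl x)| := Finset.sum_nonneg fun _ _ => abs_nonneg _
  linarith

lemma Sset_nonempty (z : Ed n m) : (Sset n m z).Nonempty := by
  refine ⟨-(bnd n m z), ?_⟩
  have : ∑ y, (z (Sum.inr y) - -(bnd n m z))⁻ = 0 := by
    apply Finset.sum_eq_zero
    intro y _
    rw [negPart_eq_zero]
    have := abs_coord_le_bnd_inr n m z y
    have := abs_le.1 this
    linarith [this.1]
  simp only [Sset, Set.mem_setOf_eq, hs_eq, this, sub_zero]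
  exact Finset.sum_nonneg fun _ _ => negPart_nonneg _

lemma hs_neg_of_big (hm : 0 < m) (z : Ed n m) {s : ℝ} (hsb : bnd n m z < s) :
    hs n m z s < 0 := by
  rw [hs_eq]
  have h1 : ∑ x, (z (Sum.inl x) + s)⁻ = 0 := by
    apply Finset.sum_eq_zero
    intro x _
    rw [negPart_eq_zero]
    have := abs_le.1 (abs_coord_le_bnd_inl n m z x)
    linarith [this.1]
  rw [h1]
  have y0 : Fin m := ⟨0, hm⟩
  have h2 : 0 < (z (Sum.inr y0) - s)⁻ := by
    have := abs_le.1 (abs_coord_le_bnd_inr n m z y0)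
    rw [negPart_def]
    have : 0 < -(z (Sum.inr y0) - s) := by linarith [this.2]
    rw [lt_sup_iff]; left; linarith
  have h3 : (z (Sum.inr y0) - s)⁻ ≤ ∑ y, (z (Sum.inr y) - s)⁻ :=
    Finset.single_le_sum (f := fun y => (z (Sum.inr y) - s)⁻)
      (fun _ _ => negPart_nonneg _) (Finset.mem_univ y0)
  linarith

lemma Sset_bddAbove (hm : 0 < m) (z : Ed n m) : BddAbove (Sset n m z) := by
  refine ⟨bnd n m z, fun s hs0 => ?_⟩
  by_contra hlt
  push_neg at hlt
  exact absurd hs0 (by simp only [Sset, Set.mem_setOf_eq, not_le]; exact hs_neg_of_big n m hm z hlt)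

lemma Sset_closed (z : Ed n m) : IsClosed (Sset n m z) :=
  isClosed_le continuous_const (continuous_hs_s n m z)

noncomputable def splus (z : Ed n m) : ℝ := sSup (Sset n m z)

lemma splus_mem (hm : 0 < m) (z : Ed n m) : splus n m z ∈ Sset n m z :=
  (Sset_closed n m z).csSup_mem (Sset_nonempty n m z) (Sset_bddAbove n m hm z)

lemma le_splus_of_mem (hm : 0 < m) {z : Ed n m} {s : ℝ} (h : s ∈ Sset n m z) :
    s ≤ splus n m z :=
  le_csSup (Sset_bddAbove n m hm z) h

lemma mem_of_le_splus (hm : 0 < m) {z : Ed n m} {s : ℝ} (h : s ≤ splus n m z) :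
    s ∈ Sset n m z := by
  have h1 : (0:ℝ) ≤ hs n m z (splus n m z) := splus_mem n m hm z
  show (0:ℝ) ≤ hs n m z s
  exact le_trans h1 (hs_antitone n m z h)

lemma hs_splus (hm : 0 < m) (z : Ed n m) : hs n m z (splus n m z) = 0 := by
  have h1 : 0 ≤ hs n m z (splus n m z) := splus_mem n m hm z
  rcases h1.lt_or_eq with h|h
  · exfalso
    have hop : IsOpen {s | 0 < hs n m z s} :=
      isOpen_lt continuous_const (continuous_hs_s n m z)
    rcases Metric.isOpen_iff.1 hop _ h with ⟨δ, hδ, hball⟩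
    have hmem : splus n m z + δ/2 ∈ Sset n m z := by
      have hb : splus n m z + δ/2 ∈ Metric.ball (splus n m z) δ := by
        rw [Metric.mem_ball, Real.dist_eq, add_sub_cancel_left,
          abs_of_pos (by linarith : (0:ℝ) < δ/2)]
        linarith
      show (0:ℝ) ≤ hs n m z _
      exact (hball hb).le
    have := le_splus_of_mem n m hm hmem
    linarith
  · exact h.symm

lemma sc_le_splus (hm : 0 < m) {z : Ed n m} {s : ℝ} (h : hfun n m (z + s • ee n m) = 0) :
    s ≤ splus n m z :=
  le_splus_of_mem n m hm (by simp only [Sset, Set.mem_setOf_eq, hs, h]; exact le_refl 0)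

lemma hs_zero_of_between (hm : 0 < m) {z : Ed n m} {s s' : ℝ}
    (h : hs n m z s = 0) (h1 : s ≤ s') (h2 : s' ≤ splus n m z) : hs n m z s' = 0 := by
  have ha : hs n m z s' ≤ 0 := by rw [← h]; exact hs_antitone n m z h1
  have hb : 0 ≤ hs n m z s' := mem_of_le_splus n m hm h2
  linarith

/-! ### continuity of `splus` -/

lemma splus_le_of_hs_neg (hm : 0 < m) {z : Ed n m} {s₁ : ℝ} (h : hs n m z s₁ < 0) :
    splus n m z ≤ s₁ := by
  apply csSup_le (Sset_nonempty n m z)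
  intro s hsS
  by_contra hlt
  push_neg at hlt
  have : hs n m z s ≤ hs n m z s₁ := hs_antitone n m z hlt.le
  have h0 : (0:ℝ) ≤ hs n m z s := hsS
  linarith

lemma splus_continuous (hm : 0 < m) : Continuous (splus n m) := by
  rw [continuous_iff_continuousAt]
  intro z₀
  rw [ContinuousAt, Metric.tendsto_nhds]
  intro ε hε
  have husc : ∀ᶠ z in nhds z₀, splus n m z < splus n m z₀ + ε := by
    have h1 : hs n m z₀ (splus n m z₀ + ε/2) < 0 := by
      by_contra hcon
      push_neg at hcon
      have := le_splus_of_mem n m hm (s := splus n m z₀ + ε/2) hcon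
      linarith
    have hev : ∀ᶠ z in nhds z₀, hs n m z (splus n m z₀ + ε/2) < 0 :=
      ((continuous_hs_z n m _).tendsto z₀).eventually_lt_const h1
    filter_upwards [hev] with z hz
    have := splus_le_of_hs_neg n m hm hz
    linarith
  have hlsc : ∀ᶠ z in nhds z₀, splus n m z₀ - ε < splus n m z := by
    set s' := splus n m z₀ - ε/2 with hs'def
    have h0 : 0 ≤ hs n m z₀ s' := mem_of_le_splus n m hm (by simp [hs'def]; linarith)
    rcases h0.lt_or_eq with hpos|hzero
    · have hev : ∀ᶠ z in nhds z₀, 0 < hs n m z s' :=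
        ((continuous_hs_z n m _).tendsto z₀).eventually_const_lt hpos
      filter_upwards [hev] with z hz
      have : s' ≤ splus n m z := le_splus_of_mem n m hm hz.le
      simp only [hs'def] at this; linarith
    · -- plateau case
      set sM := splus n m z₀ - ε/4 with hsMdef
      have hsM0 : hs n m z₀ sM = 0 :=
        hs_zero_of_between n m hm hzero.symm (by simp [hs'def, hsMdef]; linarith)
          (by simp [hsMdef]; linarith)
      have hsU0 : hs n m z₀ (splus n m z₀) = 0 := hs_splus n m hm z₀
      -- coordinate positivity at sM
      have clx : ∀ x, 0 < z₀ (Sum.inl x) + sM := by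
        intro x
        by_contra hcon
        push_neg at hcon
        have key : hs n m z₀ s' - hs n m z₀ sM ≥ sM - s' := by
          rw [hs_eq, hs_eq]
          have e1 : (∑ x', (z₀ (Sum.inl x') + s')⁻) - (∑ x', (z₀ (Sum.inl x') + sM)⁻)
              = ∑ x', ((z₀ (Sum.inl x') + s')⁻ - (z₀ (Sum.inl x') + sM)⁻) := by
            rw [Finset.sum_sub_distrib]
          have e2 : sM - s' ≤ ∑ x', ((z₀ (Sum.inl x') + s')⁻ - (z₀ (Sum.inl x') + sM)⁻) := by
            have hterm : (z₀ (Sum.inl x) + s')⁻ - (z₀ (Sum.inl x) + sM)⁻ = sM - s' := by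
              rw [negPart_eq_neg.2 (by simp only [hs'def, hsMdef] at hcon ⊢; linarith),
                negPart_eq_neg.2 hcon]
              ring
            calc sM - s' = (z₀ (Sum.inl x) + s')⁻ - (z₀ (Sum.inl x) + sM)⁻ := hterm.symm
              _ ≤ _ := Finset.single_le_sum
                  (f := fun x' => (z₀ (Sum.inl x') + s')⁻ - (z₀ (Sum.inl x') + sM)⁻)
                  (fun x' _ => by
                    have := negPart_anti (a := z₀ (Sum.inl x') + s') (b := z₀ (Sum.inl x') + sM)
                      (by simp only [hs'def, hsMdef]; linarith)
                    show (0:ℝ) ≤ (z₀ (Sum.inl x') + s')⁻ - (z₀ (Sum.inl x') + sM)⁻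
                    linarith) (Finset.mem_univ x)
          have e3 : (∑ y, (z₀ (Sum.inr y) - s')⁻) ≤ ∑ y, (z₀ (Sum.inr y) - sM)⁻ :=
            Finset.sum_le_sum fun y _ => negPart_anti (by simp only [hs'def, hsMdef]; linarith)
          rw [← e1] at e2
          linarith
        rw [hzero.symm, hsM0] at key
        simp only [hs'def, hsMdef] at key
        linarith
      have cly : ∀ y, 0 < z₀ (Sum.inr y) - sM := by
        intro y
        by_contra hcon
        push_neg at hcon
        have key : hs n m z₀ sM - hs n m z₀ (splus n m z₀) ≥ splus n m z₀ - sM := by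
          rw [hs_eq, hs_eq]
          have e1 : (∑ y', (z₀ (Sum.inr y') - splus n m z₀)⁻) - (∑ y', (z₀ (Sum.inr y') - sM)⁻)
              = ∑ y', ((z₀ (Sum.inr y') - splus n m z₀)⁻ - (z₀ (Sum.inr y') - sM)⁻) := by
            rw [Finset.sum_sub_distrib]
          have e2 : splus n m z₀ - sM
              ≤ ∑ y', ((z₀ (Sum.inr y') - splus n m z₀)⁻ - (z₀ (Sum.inr y') - sM)⁻) := by
            have hterm : (z₀ (Sum.inr y) - splus n m z₀)⁻ - (z₀ (Sum.inr y) - sM)⁻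
                = splus n m z₀ - sM := by
              rw [negPart_eq_neg.2 (by simp only [hsMdef] at hcon ⊢; linarith),
                negPart_eq_neg.2 hcon]
              ring
            calc splus n m z₀ - sM = _ := hterm.symm
              _ ≤ _ := Finset.single_le_sum
                  (f := fun y' => (z₀ (Sum.inr y') - splus n m z₀)⁻ - (z₀ (Sum.inr y') - sM)⁻)
                  (fun y' _ => by
                    have := negPart_anti (a := z₀ (Sum.inr y') - splus n m z₀)
                      (b := z₀ (Sum.inr y') - sM) (by simp only [hsMdef]; linarith)
                    show (0:ℝ) ≤ (z₀ (Sum.inr y') - splus n m z₀)⁻ - (z₀ (Sum.inr y') - sM)⁻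
                    linarith) (Finset.mem_univ y)
          have e3 : (∑ x, (z₀ (Sum.inl x) + splus n m z₀)⁻) ≤ ∑ x, (z₀ (Sum.inl x) + sM)⁻ :=
            Finset.sum_le_sum fun x _ => negPart_anti (by simp only [hsMdef]; linarith)
          rw [← e1] at e2
          linarith
        rw [hsM0, hsU0] at key
        simp only [hsMdef] at key
        linarith
      have hev : ∀ᶠ z in nhds z₀,
          (∀ x, 0 < z (Sum.inl x) + sM) ∧ (∀ y, 0 < z (Sum.inr y) - sM) := by
        apply Filter.Eventually.and
        · rw [Filter.eventually_all]
          intro x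
          exact (((continuous_coord n m (Sum.inl x)).add continuous_const).tendsto
            z₀).eventually_const_lt (clx x)
        · rw [Filter.eventually_all]
          intro y
          exact (((continuous_coord n m (Sum.inr y)).sub continuous_const).tendsto
            z₀).eventually_const_lt (cly y)
      filter_upwards [hev] with z hz
      have hval : hs n m z sM = 0 := by
        rw [hs_eq]
        have e1 : ∑ x, (z (Sum.inl x) + sM)⁻ = 0 :=
          Finset.sum_eq_zero fun x _ => negPart_eq_zero.2 (hz.1 x).le
        have e2 : ∑ y, (z (Sum.inr y) - sM)⁻ = 0 :=
          Finset.sum_eq_zero fun y _ => negPart_eq_zero.2 (hz.2 y).le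
        rw [e1, e2]; ring
      have : sM ≤ splus n m z := le_splus_of_mem n m hm (le_of_eq hval.symm)
      simp only [hsMdef] at this
      linarith
  filter_upwards [husc, hlsc] with z h1 h2
  rw [Real.dist_eq, abs_lt]
  constructor <;> linarith

/-! ### the projection along `ee` -/

noncomputable def ipe (z : Ed n m) : ℝ := ∑ x, z (Sum.inl x) - ∑ y, z (Sum.inr y)

noncomputable def scc (z : Ed n m) : ℝ := ipe n m z / (n + m)

noncomputable def Pp (z : Ed n m) : Ed n m := z - scc n m z • ee n m

lemma continuous_ipe : Continuous (ipe n m) := by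
  unfold ipe
  exact Continuous.sub
    (continuous_finset_sum _ fun x _ => continuous_coord n m (Sum.inl x))
    (continuous_finset_sum _ fun y _ => continuous_coord n m (Sum.inr y))

lemma continuous_scc : Continuous (scc n m) := (continuous_ipe n m).div_const _

lemma continuous_Pp : Continuous (Pp n m) :=
  continuous_id.sub ((continuous_scc n m).smul continuous_const)

lemma smul_coord (t : ℝ) (z : Ed n m) (i : Fin n ⊕ Fin m) : (t • z) i = t * z i := rfl
lemma sub_coord (z w : Ed n m) (i : Fin n ⊕ Fin m) : (z - w) i = z i - w i := rfl
lemma add_coord (z w : Ed n m) (i : Fin n ⊕ Fin m) : (z + w) i = z i + w i := rfl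
lemma zero_coord (i : Fin n ⊕ Fin m) : (0 : Ed n m) i = 0 := rfl
lemma ee_inl (x : Fin n) : ee n m (Sum.inl x) = 1 := rfl
lemma ee_inr (y : Fin m) : ee n m (Sum.inr y) = -1 := rfl

lemma ipe_smul (t : ℝ) (z : Ed n m) : ipe n m (t • z) = t * ipe n m z := by
  unfold ipe
  simp only [smul_coord, ← Finset.mul_sum]
  ring

lemma ipe_add_smul_ee (z : Ed n m) (s : ℝ) :
    ipe n m (z + s • ee n m) = ipe n m z + s * (n + m) := by
  unfold ipe
  simp only [apply_inl, apply_inr, Finset.sum_add_distrib, Finset.sum_sub_distrib,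
    Finset.sum_const, Finset.card_univ, Fintype.card_fin, nsmul_eq_mul]
  ring

lemma nm_pos (hm : 0 < m) : (0:ℝ) < (n:ℝ) + m := by
  have : (1:ℝ) ≤ m := by exact_mod_cast hm
  have : (0:ℝ) ≤ n := Nat.cast_nonneg n
  linarith

lemma ipe_Pp (hm : 0 < m) (z : Ed n m) : ipe n m (Pp n m z) = 0 := by
  have hnm : ((n:ℝ) + m) ≠ 0 := (nm_pos n m hm).ne'
  unfold Pp
  have : z - scc n m z • ee n m = z + (-(scc n m z)) • ee n m := by
    rw [neg_smul]; abel
  rw [this, ipe_add_smul_ee]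
  unfold scc
  field_simp
  ring

lemma Pp_eq_self {z : Ed n m} (h : ipe n m z = 0) : Pp n m z = z := by
  unfold Pp scc
  rw [h]
  simp

lemma Pp_zero : Pp n m 0 = 0 := by
  have h : ipe n m (0 : Ed n m) = 0 := by
    unfold ipe; simp only [zero_coord]; simp
  rw [Pp_eq_self n m h]

lemma Pp_add_smul_ee (hm : 0 < m) (z : Ed n m) (s : ℝ) :
    Pp n m (z + s • ee n m) = Pp n m z := by
  have hnm : ((n:ℝ) + m) ≠ 0 := (nm_pos n m hm).ne'
  unfold Pp
  have hscc : scc n m (z + s • ee n m) = scc n m z + s := by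
    unfold scc
    rw [ipe_add_smul_ee]
    field_simp
  rw [hscc, add_smul]
  abel

lemma Pp_idem (hm : 0 < m) (z : Ed n m) : Pp n m (Pp n m z) = Pp n m z :=
  Pp_eq_self n m (ipe_Pp n m hm z)

lemma Pp_smul (t : ℝ) (z : Ed n m) : Pp n m (t • z) = t • Pp n m z := by
  unfold Pp
  have hscc : scc n m (t • z) = t * scc n m z := by
    unfold scc
    rw [ipe_smul]
    ring
  rw [hscc, smul_sub, smul_smul]

lemma z_decomp (z : Ed n m) : Pp n m z + scc n m z • ee n m = z := by
  unfold Pp; abel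

lemma negPart_neg' (a : ℝ) : (-a)⁻ = a⁺ := by
  simp [negPart_def, posPart_def]

lemma hfun_smul_ee (s : ℝ) : hfun n m (s • ee n m) = n * s⁻ - m * s⁺ := by
  unfold hfun
  have h1 : ∀ x : Fin n, (s • ee n m) (Sum.inl x) = s := by
    intro x; rw [smul_coord, ee_inl]; ring
  have h2 : ∀ y : Fin m, (s • ee n m) (Sum.inr y) = -s := by
    intro y; rw [smul_coord, ee_inr]; ring
  simp only [h1, h2, negPart_neg', Finset.sum_const, Finset.card_univ, Fintype.card_fin,
    nsmul_eq_mul]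

lemma smul_ee_eq_zero (hn : 0 < n) (hm : 0 < m) {s : ℝ}
    (h : hfun n m (s • ee n m) = 0) : s = 0 := by
  rw [hfun_smul_ee] at h
  have hn' : (1:ℝ) ≤ n := by exact_mod_cast hn
  have hm' : (1:ℝ) ≤ m := by exact_mod_cast hm
  have hp := posPart_nonneg s
  have hq := negPart_nonneg s
  have hpq := posPart_sub_negPart s
  rcases lt_trichotomy s 0 with hl|hl|hl
  · exfalso
    rw [posPart_eq_zero.2 hl.le] at h
    have : s⁻ = -s := negPart_eq_neg.2 hl.le
    nlinarith
  · exact hl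
  · exfalso
    rw [negPart_eq_zero.2 hl.le] at h
    have : s⁺ = s := posPart_eq_self.2 hl.le
    nlinarith

lemma Pp_ne_zero (hn : 0 < n) (hm : 0 < m) {z : Ed n m} (hz : hfun n m z = 0)
    (h0 : z ≠ 0) : Pp n m z ≠ 0 := by
  intro hPp
  apply h0
  have hdec := z_decomp n m z
  rw [hPp, zero_add] at hdec
  have : scc n m z = 0 := by
    apply smul_ee_eq_zero n m hn hm
    rw [hdec]; exact hz
  rw [← hdec, this, zero_smul]

/-! ### the spaces -/

noncomputable def CmZ : Type := {z : Ed n m // hfun n m z = 0 ∧ z ≠ 0}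

noncomputable instance : TopologicalSpace (CmZ n m) := by unfold CmZ; infer_instance

noncomputable def Wsub : Submodule ℝ (Ed n m) := (ℝ ∙ (ee n m))ᗮ

lemma mem_Wsub_iff (z : Ed n m) : z ∈ Wsub n m ↔ ipe n m z = 0 := by
  rw [Wsub, Submodule.mem_orthogonal_singleton_iff_inner_right]
  have : (inner ℝ (ee n m) z : ℝ) = ipe n m z := by
    rw [PiLp.inner_apply]
    simp only [RCLike.inner_apply, conj_trivial]
    rw [Fintype.sum_sum_type]
    unfold ipe
    simp only [ee_inl, ee_inr, one_mul, neg_one_mul, mul_one, mul_neg_one]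
    rw [Finset.sum_neg_distrib]
    ring
  rw [this]

abbrev SW := Metric.sphere (0 : Wsub n m) 1

/-! ### maps between `CmZ` and `SW` -/

variable {n m}

lemma den_pos {t v : ℝ} (ht0 : 0 ≤ t) (ht1 : t ≤ 1) (hv : 0 < v) : 0 < (1 - t) + t * v := by
  rcases lt_or_ge t 1 with h|h
  · nlinarith
  · have ht : t = 1 := le_antisymm ht1 h
    rw [ht]
    simpa

lemma CmZ_Pp_ne (hn : 0 < n) (hm : 0 < m) (z : CmZ n m) : Pp n m z.1 ≠ 0 :=
  Pp_ne_zero n m hn hm z.2.1 z.2.2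

lemma CmZ_Pp_norm_pos (hn : 0 < n) (hm : 0 < m) (z : CmZ n m) : 0 < ‖Pp n m z.1‖ :=
  norm_pos_iff.2 (CmZ_Pp_ne hn hm z)

noncomputable def PhiFun (hn : 0 < n) (hm : 0 < m) (z : CmZ n m) : SW n m :=
  ⟨⟨‖Pp n m z.1‖⁻¹ • Pp n m z.1, by
      rw [mem_Wsub_iff, ipe_smul, ipe_Pp n m hm, mul_zero]⟩, by
    rw [mem_sphere_zero_iff_norm]
    rw [Submodule.coe_norm]
    show ‖‖Pp n m z.1‖⁻¹ • Pp n m z.1‖ = 1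
    rw [norm_smul, norm_inv, norm_norm]
    exact inv_mul_cancel₀ (CmZ_Pp_norm_pos hn hm z).ne'⟩

noncomputable def PsiFun (hn : 0 < n) (hm : 0 < m) (w : SW n m) : CmZ n m :=
  ⟨(w.1 : Ed n m) + splus n m (w.1 : Ed n m) • ee n m, by
    constructor
    · exact hs_splus n m hm _
    · intro h0
      have hw : ipe n m (w.1 : Ed n m) = 0 := (mem_Wsub_iff n m _).1 w.1.2
      have hP : Pp n m ((w.1 : Ed n m) + splus n m (w.1 : Ed n m) • ee n m)
          = (w.1 : Ed n m) := by
        rw [Pp_add_smul_ee n m hm, Pp_eq_self n m hw]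
      rw [h0, Pp_zero] at hP
      have hnorm : ‖w.1‖ = 1 := mem_sphere_zero_iff_norm.1 w.2
      rw [Submodule.coe_norm, ← hP] at hnorm
      simp at hnorm⟩

lemma continuous_PhiFun (hn : 0 < n) (hm : 0 < m) : Continuous (PhiFun hn hm) := by
  apply Continuous.subtype_mk
  apply Continuous.subtype_mk
  have h1 : Continuous fun z : CmZ n m => Pp n m z.1 :=
    (continuous_Pp n m).comp continuous_subtype_val
  exact (h1.norm.inv₀ fun z => (CmZ_Pp_norm_pos hn hm z).ne').smul h1

lemma continuous_PsiFun (hn : 0 < n) (hm : 0 < m) : Continuous (PsiFun hn hm) := by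
  apply Continuous.subtype_mk
  have h1 : Continuous fun w : SW n m => (w.1 : Ed n m) :=
    continuous_subtype_val.comp continuous_subtype_val
  exact h1.add (((splus_continuous n m hm).comp h1).smul continuous_const)

noncomputable def PhiC (hn : 0 < n) (hm : 0 < m) : C(CmZ n m, SW n m) :=
  ⟨PhiFun hn hm, continuous_PhiFun hn hm⟩

noncomputable def PsiC (hn : 0 < n) (hm : 0 < m) : C(SW n m, CmZ n m) :=
  ⟨PsiFun hn hm, continuous_PsiFun hn hm⟩

lemma Phi_Psi (hn : 0 < n) (hm : 0 < m) (w : SW n m) : PhiFun hn hm (PsiFun hn hm w) = w := by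
  have hw : ipe n m (w.1 : Ed n m) = 0 := (mem_Wsub_iff n m _).1 w.1.2
  have hP : Pp n m ((PsiFun hn hm w).1) = (w.1 : Ed n m) := by
    show Pp n m ((w.1 : Ed n m) + splus n m (w.1 : Ed n m) • ee n m) = _
    rw [Pp_add_smul_ee n m hm, Pp_eq_self n m hw]
  have hnorm : ‖(w.1 : Ed n m)‖ = 1 := by
    have := mem_sphere_zero_iff_norm.1 w.2
    rwa [Submodule.coe_norm] at this
  apply Subtype.ext
  apply Subtype.ext
  show ‖Pp n m ((PsiFun hn hm w).1)‖⁻¹ • Pp n m ((PsiFun hn hm w).1) = (w.1 : Ed n m)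
  rw [hP, hnorm, inv_one, one_smul]

/-- the intermediate map `z ↦ σ (P z)`. -/
noncomputable def sigmaP (hn : 0 < n) (hm : 0 < m) : C(CmZ n m, CmZ n m) :=
  ⟨fun z => ⟨Pp n m z.1 + splus n m (Pp n m z.1) • ee n m, by
    constructor
    · exact hs_splus n m hm _
    · intro h0
      have hP : Pp n m (Pp n m z.1 + splus n m (Pp n m z.1) • ee n m) = Pp n m z.1 := by
        rw [Pp_add_smul_ee n m hm, Pp_idem n m hm]
      rw [h0, Pp_zero] at hP
      exact CmZ_Pp_ne hn hm z hP.symm⟩, by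
    apply Continuous.subtype_mk
    have h1 : Continuous fun z : CmZ n m => Pp n m z.1 :=
      (continuous_Pp n m).comp continuous_subtype_val
    exact h1.add (((splus_continuous n m hm).comp h1).smul continuous_const)⟩

/-- first homotopy: from the identity to `sigmaP`. -/
noncomputable def Ha (hn : 0 < n) (hm : 0 < m) :
    (ContinuousMap.id (CmZ n m)).Homotopy (sigmaP hn hm) where
  toFun := fun p => ⟨Pp n m p.2.1 +
      ((1 - (p.1 : ℝ)) * scc n m p.2.1 + (p.1 : ℝ) * splus n m (Pp n m p.2.1)) • ee n m, by
    obtain ⟨t, z⟩ := p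
    set s' := (1 - (t : ℝ)) * scc n m z.1 + (t : ℝ) * splus n m (Pp n m z.1) with hs'
    constructor
    · -- hfun vanishes
      have hbase : hs n m (Pp n m z.1) (scc n m z.1) = 0 := by
        show hfun n m _ = 0
        rw [z_decomp]
        exact z.2.1
      have hle : scc n m z.1 ≤ splus n m (Pp n m z.1) :=
        le_splus_of_mem n m hm (le_of_eq hbase.symm)
      have ht0 : (0:ℝ) ≤ t := t.2.1
      have ht1 : (t:ℝ) ≤ 1 := t.2.2
      have h1 : scc n m z.1 ≤ s' := by nlinarith
      have h2 : s' ≤ splus n m (Pp n m z.1) := by nlinarith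
      exact hs_zero_of_between n m hm hbase h1 h2
    · intro h0
      have hP : Pp n m (Pp n m z.1 + s' • ee n m) = Pp n m z.1 := by
        rw [Pp_add_smul_ee n m hm, Pp_idem n m hm]
      rw [h0, Pp_zero] at hP
      exact CmZ_Pp_ne hn hm z hP.symm⟩
  continuous_toFun := by
    apply Continuous.subtype_mk
    have hz : Continuous fun p : unitInterval × CmZ n m => p.2.1 :=
      continuous_subtype_val.comp continuous_snd
    have hP : Continuous fun p : unitInterval × CmZ n m => Pp n m p.2.1 :=
      (continuous_Pp n m).comp hz
    have ht : Continuous fun p : unitInterval × CmZ n m => (p.1 : ℝ) :=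
      continuous_subtype_val.comp continuous_fst
    exact hP.add ((((continuous_const.sub ht).mul ((continuous_scc n m).comp hz)).add
      (ht.mul ((splus_continuous n m hm).comp hP))).smul continuous_const)
  map_zero_left z := by
    apply Subtype.ext
    show Pp n m z.1 + _ • ee n m = z.1
    norm_num
    exact z_decomp n m z.1
  map_one_left z := by
    apply Subtype.ext
    show Pp n m z.1 + _ • ee n m = Pp n m z.1 + splus n m (Pp n m z.1) • ee n m
    norm_num

/-- second homotopy: from `sigmaP` to `Ψ ∘ Φ`. -/
noncomputable def Hb (hn : 0 < n) (hm : 0 < m) :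
    (sigmaP hn hm).Homotopy ((PsiC hn hm).comp (PhiC hn hm)) where
  toFun := fun p =>
    ⟨((1 - (p.1 : ℝ)) + (p.1 : ℝ) * ‖Pp n m p.2.1‖)⁻¹ • Pp n m p.2.1 +
      splus n m (((1 - (p.1 : ℝ)) + (p.1 : ℝ) * ‖Pp n m p.2.1‖)⁻¹ • Pp n m p.2.1) • ee n m, by
    obtain ⟨t, z⟩ := p
    set c := ((1 - (t : ℝ)) + (t : ℝ) * ‖Pp n m z.1‖)⁻¹ with hc
    have hden : 0 < (1 - (t : ℝ)) + (t : ℝ) * ‖Pp n m z.1‖ := by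
      have ht0 : (0:ℝ) ≤ t := t.2.1
      have ht1 : (t:ℝ) ≤ 1 := t.2.2
      have hnp := CmZ_Pp_norm_pos hn hm z
      exact den_pos ht0 ht1 hnp
    have hcpos : 0 < c := by rw [hc]; exact inv_pos.2 hden
    have hw : ipe n m (c • Pp n m z.1) = 0 := by
      rw [ipe_smul, ipe_Pp n m hm, mul_zero]
    constructor
    · exact hs_splus n m hm _
    · intro h0
      have hP : Pp n m (c • Pp n m z.1 + splus n m (c • Pp n m z.1) • ee n m)
          = c • Pp n m z.1 := by
        rw [Pp_add_smul_ee n m hm, Pp_eq_self n m hw]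
      rw [h0, Pp_zero] at hP
      exact smul_ne_zero hcpos.ne' (CmZ_Pp_ne hn hm z) hP.symm⟩
  continuous_toFun := by
    apply Continuous.subtype_mk
    have hz : Continuous fun p : unitInterval × CmZ n m => p.2.1 :=
      continuous_subtype_val.comp continuous_snd
    have hP : Continuous fun p : unitInterval × CmZ n m => Pp n m p.2.1 :=
      (continuous_Pp n m).comp hz
    have ht : Continuous fun p : unitInterval × CmZ n m => (p.1 : ℝ) :=
      continuous_subtype_val.comp continuous_fst
    have hden : Continuous fun p : unitInterval × CmZ n m =>
        (1 - (p.1 : ℝ)) + (p.1 : ℝ) * ‖Pp n m p.2.1‖ :=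
      (continuous_const.sub ht).add (ht.mul hP.norm)
    have hdenne : ∀ p : unitInterval × CmZ n m,
        (1 - (p.1 : ℝ)) + (p.1 : ℝ) * ‖Pp n m p.2.1‖ ≠ 0 := by
      intro ⟨t, z⟩
      have ht0 : (0:ℝ) ≤ t := t.2.1
      have ht1 : (t:ℝ) ≤ 1 := t.2.2
      have hnp := CmZ_Pp_norm_pos hn hm z
      exact (den_pos ht0 ht1 hnp).ne'
    have hw : Continuous fun p : unitInterval × CmZ n m =>
        ((1 - (p.1 : ℝ)) + (p.1 : ℝ) * ‖Pp n m p.2.1‖)⁻¹ • Pp n m p.2.1 :=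
      (hden.inv₀ hdenne).smul hP
    exact hw.add (((splus_continuous n m hm).comp hw).smul continuous_const)
  map_zero_left z := by
    apply Subtype.ext
    show _ = Pp n m z.1 + splus n m (Pp n m z.1) • ee n m
    norm_num
  map_one_left z := by
    apply Subtype.ext
    have hn1 : (1 - (1:ℝ)) + 1 * ‖Pp n m z.1‖ = ‖Pp n m z.1‖ := by ring
    show ((1 - (1:ℝ)) + 1 * ‖Pp n m z.1‖)⁻¹ • Pp n m z.1 +
        splus n m (((1 - (1:ℝ)) + 1 * ‖Pp n m z.1‖)⁻¹ • Pp n m z.1) • ee n m = _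
    rw [hn1]
    rfl

/-- the homotopy equivalence between `CmZ` and the hyperplane sphere. -/
noncomputable def heCS (hn : 0 < n) (hm : 0 < m) :
    ContinuousMap.HomotopyEquiv (CmZ n m) (SW n m) where
  toFun := PhiC hn hm
  invFun := PsiC hn hm
  left_inv := ⟨((Ha hn hm).trans (Hb hn hm)).symm⟩
  right_inv := by
    have : (PhiC hn hm).comp (PsiC hn hm) = ContinuousMap.id _ :=
      ContinuousMap.ext fun w => Phi_Psi hn hm w
    rw [this]

/-! ### identification of the hyperplane sphere with the round sphere -/

lemma ee_ne_zero (hm : 0 < m) : ee n m ≠ 0 := by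
  intro h
  have h1 : ee n m (Sum.inr ⟨0, hm⟩) = 0 := by rw [h]; rfl
  rw [ee_inr] at h1
  norm_num at h1

lemma finrank_Ed : Module.finrank ℝ (Ed n m) = n + m := by
  rw [finrank_euclideanSpace]
  simp

lemma finrank_Wsub (hm : 0 < m) : Module.finrank ℝ (Wsub n m) = n + m - 1 := by
  have h1 := Submodule.finrank_add_finrank_orthogonal (K := (ℝ ∙ ee n m))
  rw [finrank_span_singleton (ee_ne_zero hm), finrank_Ed] at h1
  show Module.finrank ℝ ((ℝ ∙ ee n m)ᗮ : Submodule ℝ (Ed n m)) = n + m - 1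
  omega

noncomputable def WIso (hm : 0 < m) :
    (Wsub n m) ≃ₗᵢ[ℝ] EuclideanSpace ℝ (Fin (n + m - 1)) := by
  exact (stdOrthonormalBasis ℝ (Wsub n m)).repr.trans
    (LinearIsometryEquiv.piLpCongrLeft 2 ℝ ℝ (finCongr (finrank_Wsub hm)))

noncomputable def sphereEquiv (hm : 0 < m) :
    SW n m ≃ Metric.sphere (0 : EuclideanSpace ℝ (Fin (n + m - 1))) 1 where
  toFun w := ⟨WIso hm w.1, by
    rw [mem_sphere_zero_iff_norm, (WIso hm).norm_map]
    exact mem_sphere_zero_iff_norm.1 w.2⟩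
  invFun v := ⟨(WIso hm).symm v.1, by
    rw [mem_sphere_zero_iff_norm, (WIso hm).symm.norm_map]
    exact mem_sphere_zero_iff_norm.1 v.2⟩
  left_inv w := Subtype.ext (by simp)
  right_inv v := Subtype.ext (by simp)

noncomputable def sphereHomeo (hm : 0 < m) :
    SW n m ≃ₜ Metric.sphere (0 : EuclideanSpace ℝ (Fin (n + m - 1))) 1 :=
  { sphereEquiv hm with
    continuous_toFun := ((WIso hm).continuous.comp continuous_subtype_val).subtype_mk _
    continuous_invFun := ((WIso hm).symm.continuous.comp continuous_subtype_val).subtype_mk _ }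


/-! ### the graph side: `indRealization (subdiv (completeBipartiteGraph _ _))` -/

section Graph

variable (n m : ℕ)

abbrev BG := completeBipartiteGraph (Fin n) (Fin m)

noncomputable instance : Fintype ((BG n m).edgeSet) := Fintype.ofFinite _

abbrev VT := (Fin n ⊕ Fin m) ⊕ ((BG n m).edgeSet : Set (Sym2 (Fin n ⊕ Fin m)))

lemma edge_mem (x : Fin n) (y : Fin m) :
    s(Sum.inl x, Sum.inr y) ∈ (BG n m).edgeSet := by
  rw [SimpleGraph.mem_edgeSet]
  simp

noncomputable def eEquiv : (Fin n × Fin m) ≃ (BG n m).edgeSet := by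
  apply Equiv.ofBijective
    (fun p => (⟨s(Sum.inl p.1, Sum.inr p.2), edge_mem n m p.1 p.2⟩ : (BG n m).edgeSet))
  constructor
  · rintro ⟨x, y⟩ ⟨x', y'⟩ h
    have h2 : s(Sum.inl x, Sum.inr y) = s((Sum.inl x' : Fin n ⊕ Fin m), Sum.inr y') :=
      congrArg Subtype.val h
    rw [Sym2.eq_iff] at h2
    rcases h2 with ⟨h3, h4⟩ | ⟨h3, h4⟩
    · obtain rfl : x = x' := by exact Sum.inl_injective h3
      obtain rfl : y = y' := by exact Sum.inr_injective h4
      rfl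
    · exact absurd h3 (by simp)
  · rintro ⟨q, hq⟩
    induction q using Sym2.ind with
    | _ a b =>
      rw [SimpleGraph.mem_edgeSet] at hq
      rcases a with x | y <;> rcases b with x' | y'
      · simp at hq
      · exact ⟨(x, y'), rfl⟩
      · exact ⟨(x', y), Subtype.ext (Sym2.eq_swap)⟩
      · simp at hq

lemma eEquiv_coe (p : Fin n × Fin m) :
    ((eEquiv n m p : (BG n m).edgeSet) : Sym2 (Fin n ⊕ Fin m))
      = s(Sum.inl p.1, Sum.inr p.2) := rfl

lemma mem_eEquiv_iff (w : Fin n ⊕ Fin m) (p : Fin n × Fin m) :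
    w ∈ ((eEquiv n m p : (BG n m).edgeSet) : Sym2 (Fin n ⊕ Fin m))
      ↔ w = Sum.inl p.1 ∨ w = Sum.inr p.2 := by
  rw [eEquiv_coe]
  exact Sym2.mem_iff

abbrev SG := Paper.subdiv (BG n m)

lemma sg_adj_lr (v : Fin n ⊕ Fin m) (e : (BG n m).edgeSet) :
    (SG n m).Adj (Sum.inl v) (Sum.inr e) ↔ v ∈ (e : Sym2 (Fin n ⊕ Fin m)) := Iff.rfl

lemma sg_adj_rl (v : Fin n ⊕ Fin m) (e : (BG n m).edgeSet) :
    (SG n m).Adj (Sum.inr e) (Sum.inl v) ↔ v ∈ (e : Sym2 (Fin n ⊕ Fin m)) := Iff.rfl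

lemma sg_adj_ll (v w : Fin n ⊕ Fin m) : ¬ (SG n m).Adj (Sum.inl v) (Sum.inl w) := fun h => h

lemma sg_adj_rr (e f : (BG n m).edgeSet) : ¬ (SG n m).Adj (Sum.inr e) (Sum.inr f) := fun h => h

noncomputable def Zsub : Type :=
  {f : VT n m → ℝ // (∀ v, 0 ≤ f v) ∧ (∑ᶠ v, f v) = 1 ∧
     ∀ u v, f u ≠ 0 → f v ≠ 0 → ¬ (SG n m).Adj u v}

noncomputable instance : TopologicalSpace (Zsub n m) := by unfold Zsub; infer_instance

/-! #### row/column/total sums of the edge part -/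

noncomputable def Rrow (f : VT n m → ℝ) (x : Fin n) : ℝ :=
  ∑ y, f (Sum.inr (eEquiv n m (x, y)))

noncomputable def Kcol (f : VT n m → ℝ) (y : Fin m) : ℝ :=
  ∑ x, f (Sum.inr (eEquiv n m (x, y)))

noncomputable def gma (f : VT n m → ℝ) : ℝ :=
  ∑ p : Fin n × Fin m, f (Sum.inr (eEquiv n m p))

lemma sum_Rrow (f : VT n m → ℝ) : ∑ x, Rrow n m f x = gma n m f := by
  unfold Rrow gma
  rw [Fintype.sum_prod_type]

lemma sum_Kcol (f : VT n m → ℝ) : ∑ y, Kcol n m f y = gma n m f := by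
  unfold Kcol gma
  rw [Fintype.sum_prod_type]
  exact Finset.sum_comm

lemma total (f : VT n m → ℝ) :
    (∑ᶠ v, f v) = (∑ x, f (Sum.inl (Sum.inl x))) + (∑ y, f (Sum.inl (Sum.inr y)))
      + gma n m f := by
  rw [finsum_eq_sum_of_fintype, Fintype.sum_sum_type, Fintype.sum_sum_type]
  rw [← Equiv.sum_comp (eEquiv n m) (fun e => f (Sum.inr e))]
  unfold gma
  ring

variable {n m}

lemma Rrow_nonneg {f : VT n m → ℝ} (hf : ∀ v, 0 ≤ f v) (x : Fin n) : 0 ≤ Rrow n m f x :=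
  Finset.sum_nonneg fun _ _ => hf _

lemma Kcol_nonneg {f : VT n m → ℝ} (hf : ∀ v, 0 ≤ f v) (y : Fin m) : 0 ≤ Kcol n m f y :=
  Finset.sum_nonneg fun _ _ => hf _

lemma gma_nonneg {f : VT n m → ℝ} (hf : ∀ v, 0 ≤ f v) : 0 ≤ gma n m f :=
  Finset.sum_nonneg fun _ _ => hf _

lemma Rrow_le_gma {f : VT n m → ℝ} (hf : ∀ v, 0 ≤ f v) (x : Fin n) :
    Rrow n m f x ≤ gma n m f := by
  rw [← sum_Rrow]
  exact Finset.single_le_sum (f := fun x => Rrow n m f x)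
    (fun _ _ => Rrow_nonneg hf _) (Finset.mem_univ x)

lemma Kcol_le_gma {f : VT n m → ℝ} (hf : ∀ v, 0 ≤ f v) (y : Fin m) :
    Kcol n m f y ≤ gma n m f := by
  rw [← sum_Kcol]
  exact Finset.single_le_sum (f := fun y => Kcol n m f y)
    (fun _ _ => Kcol_nonneg hf _) (Finset.mem_univ y)

/-- independence forces the left vertex weight to vanish when a row is nonzero. -/
lemma Rrow_zero (f : Zsub n m) {x : Fin n} (h : Rrow n m f.1 x ≠ 0) :
    f.1 (Sum.inl (Sum.inl x)) = 0 := by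
  obtain ⟨y, -, hy⟩ := Finset.exists_ne_zero_of_sum_ne_zero h
  by_contra hx
  exact f.2.2.2 _ _ hx hy
    ((sg_adj_lr n m _ _).2 ((mem_eEquiv_iff n m _ _).2 (Or.inl rfl)))

lemma Kcol_zero (f : Zsub n m) {y : Fin m} (h : Kcol n m f.1 y ≠ 0) :
    f.1 (Sum.inl (Sum.inr y)) = 0 := by
  obtain ⟨x, -, hx⟩ := Finset.exists_ne_zero_of_sum_ne_zero h
  by_contra hy
  exact f.2.2.2 _ _ hy hx
    ((sg_adj_lr n m _ _).2 ((mem_eEquiv_iff n m _ _).2 (Or.inr rfl)))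

end Graph

/-! #### the forward map `F` -/

section Graph2

variable {n m : ℕ}

noncomputable def Fmap (f : VT n m → ℝ) : Ed n m := WithLp.toLp 2 (fun i =>
  Sum.elim (fun x => f (Sum.inl (Sum.inl x)) - Rrow n m f x)
    (fun y => f (Sum.inl (Sum.inr y)) - Kcol n m f y) i)

lemma Fmap_inl (f : VT n m → ℝ) (x : Fin n) :
    Fmap f (Sum.inl x) = f (Sum.inl (Sum.inl x)) - Rrow n m f x := rfl

lemma Fmap_inr (f : VT n m → ℝ) (y : Fin m) :
    Fmap f (Sum.inr y) = f (Sum.inl (Sum.inr y)) - Kcol n m f y := rfl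

lemma Fmap_neg_inl (f : Zsub n m) (x : Fin n) :
    ((Fmap f.1) (Sum.inl x))⁻ = Rrow n m f.1 x := by
  rw [Fmap_inl]
  exact pn_neg (f.2.1 _) (Rrow_nonneg f.2.1 x) (fun h => Rrow_zero f h)

lemma Fmap_pos_inl (f : Zsub n m) (x : Fin n) :
    ((Fmap f.1) (Sum.inl x))⁺ = f.1 (Sum.inl (Sum.inl x)) := by
  rw [Fmap_inl]
  exact pn_pos (f.2.1 _) (Rrow_nonneg f.2.1 x) (fun h => Rrow_zero f h)

lemma Fmap_neg_inr (f : Zsub n m) (y : Fin m) :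
    ((Fmap f.1) (Sum.inr y))⁻ = Kcol n m f.1 y := by
  rw [Fmap_inr]
  exact pn_neg (f.2.1 _) (Kcol_nonneg f.2.1 y) (fun h => Kcol_zero f h)

lemma Fmap_pos_inr (f : Zsub n m) (y : Fin m) :
    ((Fmap f.1) (Sum.inr y))⁺ = f.1 (Sum.inl (Sum.inr y)) := by
  rw [Fmap_inr]
  exact pn_pos (f.2.1 _) (Kcol_nonneg f.2.1 y) (fun h => Kcol_zero f h)

lemma hfun_Fmap (f : Zsub n m) : hfun n m (Fmap f.1) = 0 := by
  unfold hfun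
  rw [Finset.sum_congr rfl fun x _ => Fmap_neg_inl f x,
    Finset.sum_congr rfl fun y _ => Fmap_neg_inr f y, sum_Rrow, sum_Kcol, sub_self]

lemma gam_Fmap (f : Zsub n m) : gam n m (Fmap f.1) = gma n m f.1 := by
  unfold gam
  rw [Finset.sum_congr rfl fun x _ => Fmap_neg_inl f x, sum_Rrow]

lemma gfun_Fmap (f : Zsub n m) : gfun n m (Fmap f.1) = 1 := by
  unfold gfun
  rw [Finset.sum_congr rfl fun x _ => Fmap_pos_inl f x,
    Finset.sum_congr rfl fun y _ => Fmap_pos_inr f y,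
    Finset.sum_congr rfl fun x _ => Fmap_neg_inl f x, sum_Rrow]
  rw [← total n m f.1]
  exact f.2.2.1

lemma gfun_zero : gfun n m (0 : Ed n m) = 0 := by
  unfold gfun
  simp only [zero_coord]
  simp

lemma Fmap_ne (f : Zsub n m) : Fmap f.1 ≠ 0 := by
  intro h
  have h1 := gfun_Fmap f
  rw [h, gfun_zero] at h1
  norm_num at h1

noncomputable def FmapZ (f : Zsub n m) : CmZ n m := ⟨Fmap f.1, hfun_Fmap f, Fmap_ne f⟩

lemma continuous_coordZ (v : VT n m) : Continuous fun f : Zsub n m => f.1 v :=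
  (continuous_apply v).comp continuous_subtype_val

lemma continuous_Rrow (x : Fin n) : Continuous fun f : Zsub n m => Rrow n m f.1 x :=
  continuous_finset_sum _ fun y _ => continuous_coordZ _

lemma continuous_Kcol (y : Fin m) : Continuous fun f : Zsub n m => Kcol n m f.1 y :=
  continuous_finset_sum _ fun x _ => continuous_coordZ _

lemma continuous_gma : Continuous fun f : Zsub n m => gma n m f.1 :=
  continuous_finset_sum _ fun p _ => continuous_coordZ _

lemma continuous_FmapZ : Continuous (FmapZ : Zsub n m → CmZ n m) := by
  apply Continuous.subtype_mk
  refine (PiLp.continuous_toLp 2 _).comp ?_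
  apply continuous_pi
  intro i
  rcases i with x | y
  · exact ((continuous_coordZ _).sub (continuous_Rrow x))
  · exact ((continuous_coordZ _).sub (continuous_Kcol y))

/-! #### the backward map `G` -/

noncomputable def cstar (z : Ed n m) (p : Fin n × Fin m) : ℝ :=
  if gam n m z = 0 then 0
  else ((z (Sum.inl p.1))⁻ * (z (Sum.inr p.2))⁻) / (gam n m z * gfun n m z)

noncomputable def Gmap (z : Ed n m) : VT n m → ℝ := fun v =>
  Sum.elim
    (fun w => Sum.elim (fun x => (z (Sum.inl x))⁺ / gfun n m z)
      (fun y => (z (Sum.inr y))⁺ / gfun n m z) w)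
    (fun e => cstar z ((eEquiv n m).symm e)) v

lemma Gmap_ix (z : Ed n m) (x : Fin n) :
    Gmap z (Sum.inl (Sum.inl x)) = (z (Sum.inl x))⁺ / gfun n m z := rfl
lemma Gmap_iy (z : Ed n m) (y : Fin m) :
    Gmap z (Sum.inl (Sum.inr y)) = (z (Sum.inr y))⁺ / gfun n m z := rfl
lemma Gmap_ie (z : Ed n m) (e : (BG n m).edgeSet) :
    Gmap z (Sum.inr e) = cstar z ((eEquiv n m).symm e) := rfl

lemma cstar_nonneg (z : Ed n m) (p : Fin n × Fin m) : 0 ≤ cstar z p := by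
  unfold cstar
  split
  · exact le_refl 0
  · exact div_nonneg (mul_nonneg (negPart_nonneg _) (negPart_nonneg _))
      (mul_nonneg (gam_nonneg n m z) (gfun_nonneg n m z))

lemma cstar_ne_conds {z : Ed n m} {p : Fin n × Fin m} (h : cstar z p ≠ 0) :
    gam n m z ≠ 0 ∧ (z (Sum.inl p.1))⁻ ≠ 0 ∧ (z (Sum.inr p.2))⁻ ≠ 0 := by
  unfold cstar at h
  by_cases hg : gam n m z = 0
  · rw [if_pos hg] at h; exact absurd rfl h
  · rw [if_neg hg] at h
    refine ⟨hg, ?_, ?_⟩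
    · intro h0; rw [h0, zero_mul, zero_div] at h; exact h rfl
    · intro h0; rw [h0, mul_zero, zero_div] at h; exact h rfl

lemma sum_cstar {z : Ed n m} (hz : hfun n m z = 0) :
    ∑ p : Fin n × Fin m, cstar z p = gam n m z / gfun n m z := by
  unfold cstar
  rcases eq_or_ne (gam n m z) 0 with h | h
  · simp [h]
  · simp only [if_neg h]
    rw [← Finset.sum_div, Fintype.sum_prod_type]
    have : ∑ x, ∑ y, (z (Sum.inl x))⁻ * (z (Sum.inr y))⁻
        = gam n m z * gam' n m z := by
      rw [gam, gam', Finset.sum_mul_sum]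
    rw [this, gam'_eq_gam n m hz, mul_comm (gam n m z) (gfun n m z),
      mul_div_mul_right _ _ h]

/-- membership of `Gmap` in `Zsub` for `z ∈ CmZ`. -/
lemma Gmap_indep (z : CmZ n m) (a : Fin n ⊕ Fin m) (e : (BG n m).edgeSet)
    (ha : Gmap z.1 (Sum.inl a) ≠ 0) (he : Gmap z.1 (Sum.inr e) ≠ 0) :
    ¬ a ∈ (e : Sym2 (Fin n ⊕ Fin m)) := by
  intro hmem
  rw [Gmap_ie] at he
  obtain ⟨hg, hu, hv⟩ := cstar_ne_conds he
  set p := (eEquiv n m).symm e with hp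
  have hee : eEquiv n m p = e := (eEquiv n m).apply_symm_apply e
  rw [← hee, mem_eEquiv_iff] at hmem
  rcases hmem with rfl | rfl
  · rw [Gmap_ix] at ha
    have : (z.1 (Sum.inl p.1))⁺ = 0 := posPart_eq_zero.2 (negPart_pos_iff.1 hu).le
    rw [this, zero_div] at ha
    exact ha rfl
  · rw [Gmap_iy] at ha
    have : (z.1 (Sum.inr p.2))⁺ = 0 := posPart_eq_zero.2 (negPart_pos_iff.1 hv).le
    rw [this, zero_div] at ha
    exact ha rfl

lemma gma_Gmap (z : CmZ n m) (hn : 0 < n) (hm : 0 < m) :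
    gma n m (Gmap z.1) = gam n m z.1 / gfun n m z.1 := by
  unfold gma
  rw [Finset.sum_congr rfl fun p _ => by
    rw [Gmap_ie, (eEquiv n m).symm_apply_apply]]
  exact sum_cstar z.2.1

noncomputable def GmapZ (hn : 0 < n) (hm : 0 < m) (z : CmZ n m) : Zsub n m := by
  refine ⟨Gmap z.1, ?_, ?_, ?_⟩
  · intro v
    rcases v with w | e
    · rcases w with x | y
      · exact div_nonneg (posPart_nonneg _) (gfun_nonneg n m z.1)
      · exact div_nonneg (posPart_nonneg _) (gfun_nonneg n m z.1)
    · rw [Gmap_ie]; exact cstar_nonneg z.1 _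
  · rw [total, gma_Gmap z hn hm]
    have hg : gfun n m z.1 ≠ 0 := (gfun_pos n m z.2.1 z.2.2).ne'
    rw [Finset.sum_congr rfl fun x _ => Gmap_ix z.1 x,
      Finset.sum_congr rfl fun y _ => Gmap_iy z.1 y, ← Finset.sum_div, ← Finset.sum_div]
    rw [← add_div, ← add_div]
    rw [div_eq_one_iff_eq hg]
    rfl
  · intro u v hu hv hadj
    rcases u with a | e <;> rcases v with b | f
    · exact sg_adj_ll n m a b hadj
    · exact Gmap_indep z a f hu hv ((sg_adj_lr n m a f).1 hadj)
    · exact Gmap_indep z b e hv hu ((sg_adj_rl n m b e).1 hadj)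
    · exact sg_adj_rr n m e f hadj

end Graph2

/-! #### continuity of `cstar` -/

section Graph3

variable {n m : ℕ}

lemma continuous_if_ratio {X : Type} [TopologicalSpace X] {u v g w : X → ℝ}
    (hu : Continuous u) (hv : Continuous v) (hg : Continuous g) (hw : Continuous w)
    (hu0 : ∀ x, 0 ≤ u x) (hv0 : ∀ x, 0 ≤ v x)
    (hub : ∀ x, u x ≤ g x) (hvb : ∀ x, v x ≤ g x) (hw0 : ∀ x, 0 < w x) :
    Continuous fun x => if g x = 0 then 0 else u x * v x / (g x * w x) := by
  have hFnn : ∀ x, 0 ≤ (if g x = 0 then 0 else u x * v x / (g x * w x)) := by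
    intro x
    split
    · exact le_refl 0
    · exact div_nonneg (mul_nonneg (hu0 x) (hv0 x))
        (mul_nonneg (le_trans (hu0 x) (hub x)) (hw0 x).le)
  have hFub : ∀ x, (if g x = 0 then 0 else u x * v x / (g x * w x)) ≤ g x / w x := by
    intro x
    by_cases h : g x = 0
    · rw [if_pos h, h, zero_div]
    · rw [if_neg h]
      have hgpos : 0 < g x := lt_of_le_of_ne (le_trans (hu0 x) (hub x)) (Ne.symm h)
      rw [div_le_div_iff₀ (mul_pos hgpos (hw0 x)) (hw0 x)]
      have h1 : u x * v x ≤ g x * g x :=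
        mul_le_mul (hub x) (hvb x) (hv0 x) hgpos.le
      nlinarith [hw0 x]
  rw [continuous_iff_continuousAt]
  intro x₀
  by_cases h : g x₀ = 0
  · show Filter.Tendsto _ _ _
    have target : ((fun x => if g x = 0 then (0:ℝ) else u x * v x / (g x * w x)) x₀) = 0 := by
      simp only [h, if_true]
    rw [target]
    have hgw : Filter.Tendsto (fun x => g x / w x) (nhds x₀) (nhds 0) := by
      have h2 : Filter.Tendsto (fun x => g x / w x) (nhds x₀) (nhds (g x₀ / w x₀)) :=
        (hg.continuousAt).div (hw.continuousAt) (hw0 x₀).ne'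
      rwa [h, zero_div] at h2
    exact squeeze_zero hFnn hFub hgw
  · have hev : ∀ᶠ x in nhds x₀, g x ≠ 0 := hg.continuousAt.eventually_ne h
    have hca : ContinuousAt (fun x => u x * v x / (g x * w x)) x₀ :=
      ContinuousAt.div ((hu.mul hv).continuousAt) ((hg.mul hw).continuousAt)
        (mul_ne_zero h (hw0 x₀).ne')
    apply hca.congr
    filter_upwards [hev] with x hx
    rw [if_neg hx]

lemma continuous_cstarZ (p : Fin n × Fin m) :
    Continuous fun z : CmZ n m => cstar z.1 p := by
  have hval : Continuous fun z : CmZ n m => z.1 :=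
    continuous_subtype_val
  apply continuous_if_ratio
  · exact continuous_negPart.comp ((continuous_coord n m (Sum.inl p.1)).comp hval)
  · exact continuous_negPart.comp ((continuous_coord n m (Sum.inr p.2)).comp hval)
  · exact (continuous_gam n m).comp hval
  · exact (continuous_gfun n m).comp hval
  · intro z; exact negPart_nonneg _
  · intro z; exact negPart_nonneg _
  · intro z; exact coord_neg_le_gam n m z.1 p.1
  · intro z
    have := coord_neg_le_gam' n m z.1 p.2
    rwa [gam'_eq_gam n m z.2.1] at this
  · intro z; exact gfun_pos n m z.2.1 z.2.2

lemma continuous_GmapZ (hn : 0 < n) (hm : 0 < m) : Continuous (GmapZ hn hm) := by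
  apply Continuous.subtype_mk
  apply continuous_pi
  intro v
  have hval : Continuous fun z : CmZ n m => z.1 := continuous_subtype_val
  have hgf : Continuous fun z : CmZ n m => gfun n m z.1 := (continuous_gfun n m).comp hval
  have hgfne : ∀ z : CmZ n m, gfun n m z.1 ≠ 0 := fun z => (gfun_pos n m z.2.1 z.2.2).ne'
  rcases v with w | e
  · rcases w with x | y
    · exact (continuous_posPart.comp ((continuous_coord n m (Sum.inl x)).comp hval)).div
        hgf hgfne
    · exact (continuous_posPart.comp ((continuous_coord n m (Sum.inr y)).comp hval)).div
        hgf hgfne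
  · exact continuous_cstarZ ((eEquiv n m).symm e)

/-! #### the composite identities -/

lemma Rrow_Gmap (z : CmZ n m) (x : Fin n) :
    Rrow n m (Gmap z.1) x = (z.1 (Sum.inl x))⁻ / gfun n m z.1 := by
  unfold Rrow
  rw [Finset.sum_congr rfl fun y _ => by
    rw [Gmap_ie, (eEquiv n m).symm_apply_apply]]
  unfold cstar
  rcases eq_or_ne (gam n m z.1) 0 with h | h
  · simp only [if_pos h]
    have h0 : (z.1 (Sum.inl x))⁻ = 0 := by
      have h1 := coord_neg_le_gam n m z.1 x
      have h2 := negPart_nonneg (z.1 (Sum.inl x))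
      rw [h] at h1
      linarith
    rw [h0, zero_div]
    simp
  · simp only [if_neg h]
    rw [← Finset.sum_div, ← Finset.mul_sum]
    have : ∑ y, (z.1 (Sum.inr y))⁻ = gam n m z.1 := gam'_eq_gam n m z.2.1
    rw [this, mul_comm ((z.1 (Sum.inl x))⁻) (gam n m z.1), mul_div_mul_left _ _ h]

lemma Kcol_Gmap (z : CmZ n m) (y : Fin m) :
    Kcol n m (Gmap z.1) y = (z.1 (Sum.inr y))⁻ / gfun n m z.1 := by
  unfold Kcol
  rw [Finset.sum_congr rfl fun x _ => by
    rw [Gmap_ie, (eEquiv n m).symm_apply_apply]]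
  unfold cstar
  rcases eq_or_ne (gam n m z.1) 0 with h | h
  · simp only [if_pos h]
    have h0 : (z.1 (Sum.inr y))⁻ = 0 := by
      have h1 := coord_neg_le_gam' n m z.1 y
      have h2 := negPart_nonneg (z.1 (Sum.inr y))
      rw [gam'_eq_gam n m z.2.1, h] at h1
      linarith
    rw [h0, zero_div]
    simp
  · simp only [if_neg h]
    rw [← Finset.sum_div, ← Finset.sum_mul]
    have : ∑ x, (z.1 (Sum.inl x))⁻ = gam n m z.1 := rfl
    rw [this, mul_div_mul_left _ _ h]

lemma FG_identity (hn : 0 < n) (hm : 0 < m) (z : CmZ n m) :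
    Fmap (GmapZ hn hm z).1 = (gfun n m z.1)⁻¹ • z.1 := by
  ext i
  have hGval : (GmapZ hn hm z).1 = Gmap z.1 := rfl
  rcases i with x | y
  · rw [smul_coord, Fmap_inl, hGval, Rrow_Gmap z x, Gmap_ix, div_sub_div_same,
      posPart_sub_negPart, div_eq_inv_mul]
  · rw [smul_coord, Fmap_inr, hGval, Kcol_Gmap z y, Gmap_iy, div_sub_div_same,
      posPart_sub_negPart, div_eq_inv_mul]

lemma GF_identity (f : Zsub n m) :
    Gmap (Fmap f.1) = fun v => Sum.elim (fun w => f.1 (Sum.inl w))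
      (fun e => cstar (Fmap f.1) ((eEquiv n m).symm e)) v := by
  funext v
  rcases v with w | e
  · rcases w with x | y
    · rw [Gmap_ix, Fmap_pos_inl f x, gfun_Fmap f, div_one]
      rfl
    · rw [Gmap_iy, Fmap_pos_inr f y, gfun_Fmap f, div_one]
      rfl
  · rw [Gmap_ie]
    rfl

lemma sum_cstar_Fmap (f : Zsub n m) :
    ∑ p : Fin n × Fin m, cstar (Fmap f.1) p = gma n m f.1 := by
  rw [sum_cstar (hfun_Fmap f), gam_Fmap f, gfun_Fmap f, div_one]

end Graph3

/-! #### the homotopy equivalence between `Zsub` and `CmZ` -/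

section Graph4

variable {n m : ℕ}

noncomputable def FmapZC : C(Zsub n m, CmZ n m) := ⟨FmapZ, continuous_FmapZ⟩

noncomputable def GmapZC (hn : 0 < n) (hm : 0 < m) : C(CmZ n m, Zsub n m) :=
  ⟨GmapZ hn hm, continuous_GmapZ hn hm⟩

lemma den2_pos {t g : ℝ} (ht0 : 0 ≤ t) (ht1 : t ≤ 1) (hg : 0 < g) :
    0 < (1 - t) * g + t := by
  rcases eq_or_lt_of_le ht0 with h | h
  · rw [← h]; simpa
  · nlinarith

/-- straight-line homotopy from `F ∘ G` to the identity of `CmZ`. -/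
noncomputable def HomA (hn : 0 < n) (hm : 0 < m) :
    (FmapZC.comp (GmapZC hn hm)).Homotopy (ContinuousMap.id (CmZ n m)) where
  toFun p := ⟨((1 - (p.1 : ℝ)) * gfun n m p.2.1 + (p.1 : ℝ))⁻¹ • p.2.1, by
    obtain ⟨t, z⟩ := p
    have hden : 0 < (1 - (t : ℝ)) * gfun n m z.1 + (t : ℝ) :=
      den2_pos t.2.1 t.2.2 (gfun_pos n m z.2.1 z.2.2)
    constructor
    · rw [hfun_smul n m (inv_pos.2 hden).le, z.2.1, mul_zero]
    · exact smul_ne_zero (inv_pos.2 hden).ne' z.2.2⟩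
  continuous_toFun := by
    apply Continuous.subtype_mk
    have hz : Continuous fun p : unitInterval × CmZ n m => p.2.1 :=
      continuous_subtype_val.comp continuous_snd
    have ht : Continuous fun p : unitInterval × CmZ n m => (p.1 : ℝ) :=
      continuous_subtype_val.comp continuous_fst
    have hden : Continuous fun p : unitInterval × CmZ n m =>
        (1 - (p.1 : ℝ)) * gfun n m p.2.1 + (p.1 : ℝ) :=
      ((continuous_const.sub ht).mul ((continuous_gfun n m).comp hz)).add ht
    have hdenne : ∀ p : unitInterval × CmZ n m,
        (1 - (p.1 : ℝ)) * gfun n m p.2.1 + (p.1 : ℝ) ≠ 0 := fun ⟨t, z⟩ =>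
      (den2_pos t.2.1 t.2.2 (gfun_pos n m z.2.1 z.2.2)).ne'
    exact (hden.inv₀ hdenne).smul hz
  map_zero_left z := by
    apply Subtype.ext
    show ((1 - ((0 : unitInterval) : ℝ)) * gfun n m z.1 + ((0 : unitInterval) : ℝ))⁻¹ • z.1
        = Fmap (GmapZ hn hm z).1
    rw [FG_identity hn hm z]
    norm_num
  map_one_left z := by
    apply Subtype.ext
    show ((1 - ((1 : unitInterval) : ℝ)) * gfun n m z.1 + ((1 : unitInterval) : ℝ))⁻¹ • z.1
        = z.1
    norm_num

/-- straight-line homotopy from `G ∘ F` to the identity of `Zsub`. -/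
noncomputable def HomB (hn : 0 < n) (hm : 0 < m) :
    ((GmapZC hn hm).comp FmapZC).Homotopy (ContinuousMap.id (Zsub n m)) where
  toFun p := ⟨fun v => Sum.elim (fun w => p.2.1 (Sum.inl w))
      (fun e => (1 - (p.1 : ℝ)) * cstar (Fmap p.2.1) ((eEquiv n m).symm e)
        + (p.1 : ℝ) * p.2.1 (Sum.inr e)) v, by
    obtain ⟨t, f⟩ := p
    have ht0 : (0:ℝ) ≤ t := t.2.1
    have ht1 : (t:ℝ) ≤ 1 := t.2.2
    refine ⟨?_, ?_, ?_⟩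
    · intro v
      rcases v with w | e
      · exact f.2.1 _
      · exact add_nonneg (mul_nonneg (by linarith) (cstar_nonneg _ _))
          (mul_nonneg ht0 (f.2.1 _))
    · rw [total]
      have hg : gma n m (fun v => Sum.elim (fun w => f.1 (Sum.inl w))
          (fun e => (1 - (t : ℝ)) * cstar (Fmap f.1) ((eEquiv n m).symm e)
            + (t : ℝ) * f.1 (Sum.inr e)) v) = gma n m f.1 := by
        unfold gma
        show (∑ p : Fin n × Fin m,
            ((1 - (t : ℝ)) * cstar (Fmap f.1) ((eEquiv n m).symm (eEquiv n m p))
              + (t : ℝ) * f.1 (Sum.inr (eEquiv n m p)))) = _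
        have hstep : ∀ p : Fin n × Fin m,
            (1 - (t : ℝ)) * cstar (Fmap f.1) ((eEquiv n m).symm (eEquiv n m p))
              + (t : ℝ) * f.1 (Sum.inr (eEquiv n m p))
            = (1 - (t : ℝ)) * cstar (Fmap f.1) p
              + (t : ℝ) * f.1 (Sum.inr (eEquiv n m p)) := fun p => by
          rw [(eEquiv n m).symm_apply_apply]
        rw [Finset.sum_congr rfl fun p _ => hstep p]
        rw [Finset.sum_add_distrib, ← Finset.mul_sum, ← Finset.mul_sum, sum_cstar_Fmap f]
        show (1 - (t : ℝ)) * gma n m f.1 + (t : ℝ) * gma n m f.1 = gma n m f.1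
        ring
      rw [hg]
      show (∑ x, f.1 (Sum.inl (Sum.inl x))) + (∑ y, f.1 (Sum.inl (Sum.inr y)))
          + gma n m f.1 = 1
      rw [← total n m f.1]
      exact f.2.2.1
    · have hcase : ∀ (a : Fin n ⊕ Fin m) (e : (BG n m).edgeSet),
          f.1 (Sum.inl a) ≠ 0 →
          (1 - (t : ℝ)) * cstar (Fmap f.1) ((eEquiv n m).symm e)
            + (t : ℝ) * f.1 (Sum.inr e) ≠ 0 →
          a ∈ (e : Sym2 (Fin n ⊕ Fin m)) → False := by
        intro a e ha he hmem
        by_cases hc : f.1 (Sum.inr e) = 0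
        · have hcst : cstar (Fmap f.1) ((eEquiv n m).symm e) ≠ 0 := by
            intro h0
            apply he
            rw [h0, hc, mul_zero, mul_zero, add_zero]
          obtain ⟨-, hu', hv'⟩ := cstar_ne_conds hcst
          rw [Fmap_neg_inl f] at hu'
          rw [Fmap_neg_inr f] at hv'
          have hx0 := Rrow_zero f hu'
          have hy0 := Kcol_zero f hv'
          rw [← (eEquiv n m).apply_symm_apply e, mem_eEquiv_iff] at hmem
          rcases hmem with rfl | rfl
          · exact ha hx0
          · exact ha hy0
        · exact f.2.2.2 (Sum.inl a) (Sum.inr e) ha hc ((sg_adj_lr n m _ _).2 hmem)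
      intro u v hu hv hadj
      rcases u with a | e <;> rcases v with b | e'
      · exact sg_adj_ll n m a b hadj
      · exact hcase a e' hu hv ((sg_adj_lr n m _ _).1 hadj)
      · exact hcase b e hv hu ((sg_adj_lr n m _ _).1 hadj.symm)
      · exact sg_adj_rr n m e e' hadj⟩
  continuous_toFun := by
    apply Continuous.subtype_mk
    apply continuous_pi
    intro v
    have hf : Continuous fun p : unitInterval × Zsub n m => p.2 := continuous_snd
    have ht : Continuous fun p : unitInterval × Zsub n m => (p.1 : ℝ) :=
      continuous_subtype_val.comp continuous_fst
    rcases v with w | e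
    · exact (continuous_coordZ (Sum.inl w)).comp hf
    · have hcst : Continuous fun p : unitInterval × Zsub n m =>
          cstar (Fmap p.2.1) ((eEquiv n m).symm e) := by
        have := (continuous_cstarZ (n := n) (m := m) ((eEquiv n m).symm e)).comp
          (continuous_FmapZ.comp hf)
        exact this
      exact ((continuous_const.sub ht).mul hcst).add
        (ht.mul ((continuous_coordZ (Sum.inr e)).comp hf))
  map_zero_left f := by
    apply Subtype.ext
    show (fun v => Sum.elim (fun w => f.1 (Sum.inl w)) _ v) = Gmap (Fmap f.1)
    rw [GF_identity f]
    funext v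
    rcases v with w | e
    · rfl
    · show (1 - ((0 : unitInterval) : ℝ)) * cstar (Fmap f.1) ((eEquiv n m).symm e)
          + ((0 : unitInterval) : ℝ) * f.1 (Sum.inr e) = _
      norm_num
  map_one_left f := by
    apply Subtype.ext
    funext v
    rcases v with w | e
    · rfl
    · show (1 - ((1 : unitInterval) : ℝ)) * cstar (Fmap f.1) ((eEquiv n m).symm e)
          + ((1 : unitInterval) : ℝ) * f.1 (Sum.inr e) = f.1 (Sum.inr e)
      norm_num

/-- the homotopy equivalence between the independence-complex realization and `CmZ`. -/
noncomputable def heZC (hn : 0 < n) (hm : 0 < m) :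
    ContinuousMap.HomotopyEquiv (Zsub n m) (CmZ n m) where
  toFun := FmapZC
  invFun := GmapZC hn hm
  left_inv := ⟨HomB hn hm⟩
  right_inv := ⟨HomA hn hm⟩

end Graph4

end SphereAux

/-- `Ind(S(K_{n,m}))` is homotopy equivalent to a sphere of
dimension `n + m - 2`. -/
theorem ind_subdiv_completeBipartite_homotopyEquiv_sphere (n m : ℕ)
    (hn : 0 < n) (hm : 0 < m) :
    Nonempty (ContinuousMap.HomotopyEquiv
      (indRealization (subdiv (completeBipartiteGraph (Fin n) (Fin m))))
      (Metric.sphere (0 : EuclideanSpace ℝ (Fin (n + m - 1))) 1)) := by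
  refine ⟨?_⟩
  exact ((SphereAux.heZC (n := n) (m := m) hn hm).trans
    ((SphereAux.heCS (n := n) (m := m) hn hm).trans
      (SphereAux.sphereHomeo (n := n) (m := m) hm).toHomotopyEquiv))

end Paper
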